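/- The polynomial ring ℝ[X,Y,Z] is not locally stable. -/

import Mathlib

/-- A commutative ring has stable range 1. -/
def HasStableRange1 (R : Type*) [CommRing R] : Prop :=
  ∀ a b : R, Ideal.span {a} ⊔ Ideal.span {b} = ⊤ → ∃ y : R, IsUnit (a + b * y)

/-- An element `a` is stable if `R/aR` has stable range 1. -/
def IsStableElem {R : Type*} [CommRing R] (a : R) : Prop :=
  HasStableRange1 (R ⧸ Ideal.span {a})

/-- A commutative ring is locally stable. -/
def LocallyStable (R : Type*) [CommRing R] : Prop :=
  ∀ a b : R, Ideal.span {a} ⊔ Ideal.span {b} = ⊤ →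
    ∃ y : R, HasStableRange1 (R ⧸ Ideal.span {a + b * y})

/-- A clean ring: every element is the sum of an idempotent and a unit. -/
def IsCleanRing (R : Type*) [CommRing R] : Prop :=
  ∀ a : R, ∃ e u : R, IsIdempotentElem e ∧ IsUnit u ∧ a = e + u

/-- A ring has neat range 1. -/
def NeatRange1 (R : Type*) [CommRing R] : Prop :=
  ∀ a b : R, Ideal.span {a} ⊔ Ideal.span {b} = ⊤ →
    ∃ y : R, IsCleanRing (R ⧸ Ideal.span {a + b * y})

/-- A ring has almost stable range 1: every proper homomorphic image has stable range 1. -/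
def AlmostStableRange1 (R : Type*) [CommRing R] : Prop :=
  ∀ I : Ideal R, I ≠ ⊥ → HasStableRange1 (R ⧸ I)

/-- An elementary divisor ring: every rectangular matrix admits diagonal reduction. -/
def ElementaryDivisorRing (R : Type*) [CommRing R] : Prop :=
  ∀ (m n : ℕ) (A : Matrix (Fin m) (Fin n) R),
    ∃ (P : Matrix (Fin m) (Fin m) R) (Q : Matrix (Fin n) (Fin n) R),
      IsUnit P ∧ IsUnit Q ∧
      (∀ (i : Fin m) (j : Fin n), (i : ℕ) ≠ (j : ℕ) → (P * A * Q) i j = 0) ∧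
      (∀ (i i' : Fin m) (j j' : Fin n), (i : ℕ) = (j : ℕ) → (i' : ℕ) = (j' : ℕ) →
        (i' : ℕ) = (i : ℕ) + 1 → (P * A * Q) i j ∣ (P * A * Q) i' j')

/-- A ring is strongly completable. -/
def StronglyCompletable (R : Type*) [CommRing R] : Prop :=
  ∀ (n : ℕ) (hn : 0 < n) (a : Fin n → R) (d : R),
    (⨆ i, Ideal.span {a i}) = Ideal.span {d} →
    ∃ A : Matrix (Fin n) (Fin n) R, (∀ j, A ⟨0, hn⟩ j = a j) ∧ A.det = d

/-
We show that `ℝ[X,Y,Z]` is not locally stable.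

Outline.  Suppose it were.  Apply local stability to the comaximal pair
`(X₀, X₀² + 1)` to get `y` such that `T := ℝ[X₀,X₁,X₂]/(c)` has stable
range 1, where `c = X₀ + (X₀² + 1)·y`.

Substituting `X₀ ↦ t, X₁ ↦ t, X₂ ↦ v` gives a surjection onto
`ℝ[t,v]/(H)` with `H = t + (t²+1)·Y` never a (bi)constant.  Substituting
further `t ↦ u + v^K` for large `K` turns `H` into a polynomial `h'` in
`v` over `ℝ[u]` of degree `N ≥ 1` whose `v`-leading coefficient is a
nonzero real constant (the degrees `K·deg + e` of the images of distinct
monomials are distinct, so no cancellation occurs).  So `T` surjects onto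
`C := ℝ[u][v]/(h'')` with `h''` monic of degree `N ≥ 1`, and `C` inherits
stable range 1.

But `C` never has stable range 1: `C` is free of rank `N` over `ℝ[u]`;
for the comaximal pair `(u, b(u))`, `b = u² - 2cos(π/(2N))·u + 1`,
stable range 1 would give a unit `u + b·q`; its norm down to `ℝ[u]` is a
unit, i.e. a nonzero real constant `r`, and is congruent to `u^N` modulo
`b`.  Evaluating at the complex root `ζ = exp(iπ/(2N))` of `b` gives
`r = ζ^N = i`, contradicting `r ∈ ℝ`.
-/

open Polynomial

section Transfer

lemma span_pair_top_of_eq_one {R : Type*} [CommRing R] {a b u v : R}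
    (h : a * u + b * v = 1) : Ideal.span {a} ⊔ Ideal.span {b} = ⊤ := by
  rw [Ideal.eq_top_iff_one]
  have ha : a * u ∈ Ideal.span ({a} : Set R) :=
    Ideal.mem_span_singleton.mpr ⟨u, rfl⟩
  have hb : b * v ∈ Ideal.span ({b} : Set R) :=
    Ideal.mem_span_singleton.mpr ⟨v, rfl⟩
  rw [← h]
  exact Submodule.add_mem_sup ha hb

lemma one_eq_of_span_pair_top {R : Type*} [CommRing R] {a b : R}
    (h : Ideal.span {a} ⊔ Ideal.span {b} = ⊤) : ∃ u v : R, a * u + b * v = 1 := by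
  have h1 : (1 : R) ∈ Ideal.span {a} ⊔ Ideal.span {b} := h ▸ Submodule.mem_top
  rcases Submodule.mem_sup.mp h1 with ⟨x, hx, y, hy, hxy⟩
  rcases Ideal.mem_span_singleton.mp hx with ⟨u, rfl⟩
  rcases Ideal.mem_span_singleton.mp hy with ⟨v, rfl⟩
  exact ⟨u, v, hxy⟩

/-- Stable range 1 passes to surjective images. -/
lemma hasStableRange1_of_surjective {A B : Type*} [CommRing A] [CommRing B]
    (f : A →+* B) (hf : Function.Surjective f) (h : HasStableRange1 A) :
    HasStableRange1 B := by
  intro a b hab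
  rcases one_eq_of_span_pair_top hab with ⟨u, v, huv⟩
  rcases hf a with ⟨a₀, rfl⟩
  rcases hf b with ⟨b₀, rfl⟩
  rcases hf u with ⟨u₀, rfl⟩
  rcases hf v with ⟨v₀, rfl⟩
  set k : A := 1 - a₀ * u₀ - b₀ * v₀ with hk
  have hcom : Ideal.span {a₀} ⊔ Ideal.span {b₀ * v₀ + k} = ⊤ := by
    apply span_pair_top_of_eq_one (u := u₀) (v := 1)
    ring
  rcases h a₀ (b₀ * v₀ + k) hcom with ⟨z, hz⟩
  refine ⟨f v₀ * f z, ?_⟩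
  have hk0 : f k = 0 := by
    simp only [hk, map_sub, map_mul, map_one]
    rw [← huv]; ring
  have := hz.map f
  rw [map_add, map_mul, map_add, map_mul, hk0] at this
  convert this using 1
  ring

/-- If `f : R → S` is surjective and kills `c`, stable range 1 of `R/(c)`
implies stable range 1 of `S`. -/
lemma sr1_transfer {R S : Type*} [CommRing R] [CommRing S] (f : R →+* S)
    (hf : Function.Surjective f) (c : R) (hc : f c = 0)
    (h : HasStableRange1 (R ⧸ Ideal.span {c})) : HasStableRange1 S := by
  have hker : ∀ a ∈ Ideal.span ({c} : Set R), f a = 0 := by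
    intro a ha
    obtain ⟨t, rfl⟩ := Ideal.mem_span_singleton.mp ha
    rw [map_mul, hc, zero_mul]
  have hFs : Function.Surjective (Ideal.Quotient.lift (Ideal.span {c}) f hker) := by
    intro s
    obtain ⟨r, rfl⟩ := hf s
    exact ⟨Ideal.Quotient.mk _ r, Ideal.Quotient.lift_mk _ _ _⟩
  exact hasStableRange1_of_surjective _ hFs h

end Transfer

noncomputable section Norm

local notation "A" => Polynomial ℝ
local notation "P" => Polynomial (Polynomial ℝ)

/-- The quadratic `X² - 2 cos(π/(2N)) X + 1 ∈ ℝ[X]`, with complex root `exp(iπ/(2N))`. -/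
def bpoly (N : ℕ) : A :=
  X ^ 2 - C (2 * Real.cos (Real.pi / (2 * N))) * X + 1

lemma bpoly_eq (N : ℕ) : bpoly N = X * (X - C (2 * Real.cos (Real.pi / (2 * N)))) + 1 := by
  unfold bpoly; ring

/-- evaluation of the quadratic at `ζ = exp(iθ)` is zero. -/
lemma aeval_zeta_quad (θ : ℝ) :
    aeval (Complex.exp ((θ : ℝ) * Complex.I))
      ((X ^ 2 - C (2 * Real.cos θ) * X + 1 : Polynomial ℝ)) = 0 := by
  have hζ : Complex.exp ((θ : ℂ) * Complex.I)
      = Complex.cos θ + Complex.sin θ * Complex.I := Complex.exp_mul_I _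
  simp only [map_add, map_sub, map_mul, map_pow, aeval_X, aeval_C, map_one]
  have hcast : (algebraMap ℝ ℂ) 2 * (algebraMap ℝ ℂ) (Real.cos θ)
      = 2 * Complex.cos (θ:ℂ) := by
    have h2 : (algebraMap ℝ ℂ) 2 = ((2:ℝ):ℂ) := rfl
    have h3 : (algebraMap ℝ ℂ) (Real.cos θ) = ((Real.cos θ : ℝ):ℂ) := rfl
    rw [h2, h3, Complex.ofReal_cos]
    norm_num
  rw [hcast, hζ]
  have h1 : Complex.sin (θ:ℂ) ^ 2 + Complex.cos (θ:ℂ) ^ 2 = 1 := Complex.sin_sq_add_cos_sq _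
  have hI : Complex.I ^ 2 = -1 := Complex.I_sq
  linear_combination (-1 : ℂ) * h1 + (Complex.sin (θ:ℂ))^2 * hI

lemma aeval_zeta_bpoly (N : ℕ) :
    aeval (Complex.exp ((Real.pi / (2 * N) : ℝ) * Complex.I)) (bpoly N) = 0 :=
  aeval_zeta_quad (Real.pi / (2 * N))

lemma zeta_pow (N : ℕ) (hN : N ≠ 0) :
    (Complex.exp ((Real.pi / (2 * N) : ℝ) * Complex.I)) ^ N = Complex.I := by
  rw [← Complex.exp_nat_mul]
  have : (N : ℂ) * ((Real.pi / (2 * N) : ℝ) * Complex.I) = (Real.pi / 2 : ℝ) * Complex.I := by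
    push_cast
    have : (N : ℂ) ≠ 0 := Nat.cast_ne_zero.mpr hN
    field_simp
  rw [this, Complex.exp_mul_I]
  rw [← Complex.ofReal_cos, ← Complex.ofReal_sin, Real.cos_pi_div_two, Real.sin_pi_div_two]
  simp

/-- Key local fact: the quotient of `ℝ[u][v]` by a polynomial which is monic in `v`
of degree ≥ 1 never has stable range 1.  (Norm argument.) -/
theorem not_sr1_adjoinRoot {g : Polynomial (Polynomial ℝ)} (hg : g.Monic)
    (hdeg : 1 ≤ g.natDegree) : ¬ HasStableRange1 (AdjoinRoot g) := by
  intro hsr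
  set N := g.natDegree with hN
  set c₂ : ℝ := 2 * Real.cos (Real.pi / (2 * N)) with hc₂
  set S := AdjoinRoot g
  set aEl : S := algebraMap A S X with haEl
  set bEl : S := algebraMap A S (bpoly N) with hbEl
  -- comaximality
  have hcom : Ideal.span {aEl} ⊔ Ideal.span {bEl} = ⊤ := by
    apply span_pair_top_of_eq_one (u := -(algebraMap A S (X - C c₂))) (v := 1)
    have : bpoly N = X * (X - C c₂) + 1 := bpoly_eq N
    have h2 : bEl = aEl * algebraMap A S (X - C c₂) + 1 := by
      rw [hbEl, this, map_add, map_mul, map_one, haEl]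
    rw [h2]; ring
  rcases hsr aEl bEl hcom with ⟨q, hq⟩
  -- norm via power basis
  set pb := AdjoinRoot.powerBasis' hg with hpb
  set M := Algebra.leftMulMatrix pb.basis with hM
  set μ : A := (M (aEl + bEl * q)).det with hμ
  have hμunit : IsUnit μ := by
    have h1 : IsUnit (M (aEl + bEl * q)) := hq.map M.toRingHom
    exact (Matrix.isUnit_iff_isUnit_det _).mp h1
  -- μ ≡ X ^ pb.dim  mod  bpoly N
  set I : Ideal A := Ideal.span {bpoly N} with hI
  set π := Ideal.Quotient.mk I with hπ
  have hcong : π μ = π (X ^ pb.dim) := by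
    have hdet : π μ = (π.mapMatrix (M (aEl + bEl * q))).det := RingHom.map_det π _
    have hsplit : M (aEl + bEl * q) = M aEl + M bEl * M q := by
      rw [map_add, map_mul]
    have hMa : M aEl = algebraMap A _ (X : A) := M.commutes X
    have hMb : M bEl = algebraMap A _ (bpoly N) := M.commutes (bpoly N)
    have hmapb : π.mapMatrix (M bEl) = 0 := by
      rw [hMb]
      ext i j
      simp only [RingHom.mapMatrix_apply, Matrix.map_apply, Matrix.zero_apply]
      rw [Algebra.algebraMap_eq_smul_one]
      simp only [Matrix.smul_apply, smul_eq_mul, Matrix.one_apply]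
      split
      · rw [mul_one]
        exact Ideal.Quotient.eq_zero_iff_mem.mpr (Ideal.subset_span rfl)
      · simp
    have : π.mapMatrix (M (aEl + bEl * q)) = π.mapMatrix (M aEl) := by
      rw [hsplit, map_add, map_mul, hmapb, zero_mul, add_zero]
    rw [hdet, this, hMa]
    rw [← RingHom.map_det]
    congr 1
    rw [Algebra.algebraMap_eq_smul_one]
    rw [Matrix.det_smul, Matrix.det_one, mul_one]
    simp
  -- μ is a nonzero real constant
  have hμdeg : μ.natDegree = 0 := Polynomial.natDegree_eq_zero_of_isUnit hμunit
  have hμC : μ = C (μ.coeff 0) := Polynomial.eq_C_of_natDegree_eq_zero hμdeg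
  set r : ℝ := μ.coeff 0 with hr
  -- divisibility
  have hdvd : bpoly N ∣ (X ^ pb.dim - C r) := by
    rw [← Ideal.mem_span_singleton, ← hI]
    have h0 : π (X ^ pb.dim - C r) = 0 := by
      rw [map_sub, ← hcong, hμC]
      exact sub_self _
    exact (Ideal.Quotient.eq_zero_iff_mem).mp h0
  rcases hdvd with ⟨w, hw⟩
  -- evaluate at ζ
  set ζ : ℂ := Complex.exp ((Real.pi / (2 * N) : ℝ) * Complex.I) with hζ
  have hev : (aeval ζ) (X ^ pb.dim - C r) = (aeval ζ) (bpoly N * w) := by rw [hw]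
  rw [map_mul, aeval_zeta_bpoly N, zero_mul, map_sub, map_pow, aeval_X, aeval_C] at hev
  have hdim : pb.dim = N := AdjoinRoot.powerBasis'_dim hg
  rw [hdim] at hev
  have hNne : N ≠ 0 := by omega
  rw [zeta_pow N hNne] at hev
  -- contradiction: I = real
  have halg : (algebraMap ℝ ℂ) r = (r : ℂ) := rfl
  rw [halg] at hev
  have him := congrArg Complex.im hev
  simp [Complex.sub_im, Complex.I_im, Complex.ofReal_im, Complex.zero_im] at him

end Norm

noncomputable section Bookkeeping

local notation "A" => Polynomial ℝ
local notation "P" => Polynomial (Polynomial ℝ)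

/-- the substitute for the inner variable -/
def wP (K : ℕ) : P := X ^ K + C X

/-- coefficient map: `ℝ[t] → ℝ[u][v]`, `t ↦ wP K`. -/
def cf (K : ℕ) : Polynomial ℝ →+* P := (Polynomial.aeval (wP K)).toRingHom

/-- substitution `ℝ[t][v] → ℝ[u][v]`, `t ↦ wP K`, `v ↦ v`. -/
def τ (K : ℕ) : P →+* P := Polynomial.eval₂RingHom (cf K) X

lemma wP_natDegree (K : ℕ) : (wP K).natDegree = K := natDegree_X_pow_add_C

lemma wP_leadingCoeff {K : ℕ} (hK : 1 ≤ K) : (wP K).leadingCoeff = 1 := by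
  have hdlt : (C (X : A) : P).degree < ((X : P) ^ K).degree := by
    apply lt_of_le_of_lt (degree_C_le)
    rw [degree_X_pow]
    exact_mod_cast hK
  have hw : wP K = C (X : A) + (X : P) ^ K := by rw [wP]; ring
  rw [hw, leadingCoeff_add_of_degree_lt hdlt, leadingCoeff_X_pow]

lemma aeval_wP_eq_comp (K : ℕ) (p : A) :
    Polynomial.aeval (wP K) p = (p.map (Polynomial.C : ℝ →+* A)).comp (wP K) := by
  rw [Polynomial.comp, Polynomial.eval₂_map]
  rw [Polynomial.aeval_def]
  congr 1

lemma aeval_wP_natDegree {K : ℕ} (p : A) :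
    (Polynomial.aeval (wP K) p : P).natDegree = p.natDegree * K := by
  rw [aeval_wP_eq_comp, natDegree_comp, natDegree_map_eq_of_injective C_injective, wP_natDegree]

lemma aeval_wP_leadingCoeff {K : ℕ} (hK : 1 ≤ K) (p : A) :
    (Polynomial.aeval (wP K) p : P).leadingCoeff = C p.leadingCoeff := by
  rw [aeval_wP_eq_comp, leadingCoeff_comp (by rw [wP_natDegree]; omega),
    leadingCoeff_map_of_injective C_injective, wP_leadingCoeff hK, one_pow, mul_one]

lemma aeval_wP_ne_zero {K : ℕ} (hK : 1 ≤ K) {p : A} (hp : p ≠ 0) :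
    (Polynomial.aeval (wP K) p : P) ≠ 0 := by
  rw [← leadingCoeff_ne_zero, aeval_wP_leadingCoeff hK]
  simpa using (leadingCoeff_ne_zero.mpr hp)

/-- Key bookkeeping lemma: substituting `t ↦ X^K + C X` (`K` large) into a
polynomial which is not a "constant" produces a polynomial of positive degree
whose leading coefficient is a nonzero real constant. -/
lemma lemB (H : P) (hH : ∀ r : ℝ, H ≠ C (C r)) :
    ∃ r₀ : ℝ, r₀ ≠ 0 ∧
      (τ (H.natDegree + 1) H).leadingCoeff = C r₀ ∧
      1 ≤ (τ (H.natDegree + 1) H).natDegree := by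
  set K := H.natDegree + 1 with hKdef
  have hK : 1 ≤ K := by omega
  have hH0 : H ≠ 0 := by
    intro h
    exact hH 0 (by rw [h]; simp)
  set T : ℕ → P := fun e => (Polynomial.aeval (wP K) (H.coeff e) : P) * X ^ e with hT
  set D : ℕ → ℕ := fun e => (H.coeff e).natDegree * K + e with hD
  have hsum : τ K H = ∑ e ∈ H.support, T e := by
    show Polynomial.eval₂ (cf K) X H = _
    rw [Polynomial.eval₂_eq_sum, Polynomial.sum_def]
    exact Finset.sum_congr rfl fun n _ => rfl
  have hTne : ∀ e ∈ H.support, T e ≠ 0 := by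
    intro e he
    exact mul_ne_zero (aeval_wP_ne_zero hK (mem_support_iff.mp he)) (pow_ne_zero _ X_ne_zero)
  have hTdeg : ∀ e ∈ H.support, (T e).natDegree = D e := by
    intro e he
    rw [hT]
    rw [natDegree_mul (aeval_wP_ne_zero hK (mem_support_iff.mp he)) (pow_ne_zero _ X_ne_zero),
      aeval_wP_natDegree, natDegree_X_pow]
  have hTdeg' : ∀ e ∈ H.support, (T e).degree = (D e : WithBot ℕ) := by
    intro e he
    rw [degree_eq_natDegree (hTne e he), hTdeg e he]
  have hTlc : ∀ e ∈ H.support, (T e).leadingCoeff = C ((H.coeff e).leadingCoeff) := by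
    intro e he
    rw [hT]
    show ((Polynomial.aeval (wP K) (H.coeff e) : P) * X ^ e).leadingCoeff = _
    rw [leadingCoeff_mul, leadingCoeff_X_pow, mul_one, aeval_wP_leadingCoeff hK]
  have hmem_lt : ∀ e ∈ H.support, e < K := by
    intro e he
    have := le_natDegree_of_ne_zero (mem_support_iff.mp he)
    omega
  have hmod : ∀ e ∈ H.support, D e % K = e := by
    intro e he
    show ((H.coeff e).natDegree * K + e) % K = e
    rw [add_comm, Nat.add_mul_mod_self_right]
    exact Nat.mod_eq_of_lt (hmem_lt e he)
  obtain ⟨e₀, he₀, hmax⟩ := Finset.exists_max_image H.support D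
    (Polynomial.nonempty_support_iff.mpr hH0)
  have hstrict : ∀ e ∈ H.support.erase e₀, D e < D e₀ := by
    intro e he
    have he' : e ∈ H.support := Finset.mem_of_mem_erase he
    rcases lt_or_eq_of_le (hmax e he') with h | h
    · exact h
    · exfalso
      have : e = e₀ := by
        have h1 := hmod e he'
        have h2 := hmod e₀ he₀
        rw [h, h2] at h1
        exact h1.symm ▸ rfl
      exact (Finset.ne_of_mem_erase he) this
  have hsplit : τ K H = (∑ e ∈ H.support.erase e₀, T e) + T e₀ := by
    rw [hsum, Finset.sum_erase_add _ _ he₀]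
  have hrest : (∑ e ∈ H.support.erase e₀, T e).degree < (T e₀).degree := by
    apply lt_of_le_of_lt (degree_sum_le _ _)
    rw [hTdeg' e₀ he₀]
    rw [Finset.sup_lt_iff (by exact WithBot.bot_lt_coe _)]
    intro b hb
    rw [hTdeg' b (Finset.mem_of_mem_erase hb)]
    exact_mod_cast hstrict b hb
  have hlc : (τ K H).leadingCoeff = C ((H.coeff e₀).leadingCoeff) := by
    rw [hsplit, leadingCoeff_add_of_degree_lt hrest, hTlc e₀ he₀]
  have hdeg : (τ K H).natDegree = D e₀ := by
    apply natDegree_eq_of_degree_eq_some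
    rw [hsplit, degree_add_eq_right_of_degree_lt hrest, hTdeg' e₀ he₀]
  refine ⟨(H.coeff e₀).leadingCoeff, leadingCoeff_ne_zero.mpr (mem_support_iff.mp he₀), hlc, ?_⟩
  rw [hdeg]
  by_contra hcon
  push_neg at hcon
  have hD0 : D e₀ = 0 := by omega
  have hD0' : (H.coeff e₀).natDegree * K + e₀ = 0 := hD0
  have he₀0 : e₀ = 0 := by omega
  have hm0 : (H.coeff e₀).natDegree = 0 := by
    have h1 : (H.coeff e₀).natDegree * K = 0 := by omega
    rcases Nat.mul_eq_zero.mp h1 with h | h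
    · exact h
    · omega
  have hsupp : H.natDegree = 0 := by
    have hmem : H.natDegree ∈ H.support := natDegree_mem_support_of_nonzero hH0
    have h1 : H.natDegree ≤ D H.natDegree := Nat.le_add_left _ _
    have h2 := hmax H.natDegree hmem
    omega
  have hHC : H = C (H.coeff 0) := eq_C_of_natDegree_eq_zero hsupp
  have hm0' : (H.coeff 0).natDegree = 0 := he₀0 ▸ hm0
  obtain ⟨r, hr⟩ := Polynomial.natDegree_eq_zero.mp hm0'
  exact hH r (by rw [hHC, ← hr])

lemma X_sq_add_one_natDegree : ((X : A) ^ 2 + 1).natDegree = 2 := by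
  rw [show ((X : A) ^ 2 + 1) = X ^ 2 + C 1 by rw [map_one], natDegree_X_pow_add_C]

lemma X_sq_add_one_ne_zero : ((X : A) ^ 2 + 1) ≠ 0 := by
  intro h0
  have := congrArg natDegree h0
  rw [X_sq_add_one_natDegree] at this
  simp at this

lemma myX_ne_C (r : ℝ) : (X : A) ≠ C r := by
  intro h
  have := congrArg natDegree h
  simp at this

/-- `t + (t²+1)·Y` is never a constant. -/
lemma nonconst (Yh : P) (r : ℝ) :
    (C (X : A) : P) + ((C (X : A)) ^ 2 + 1) * Yh ≠ C (C r) := by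
  intro h
  have hC2 : ((C (X : A) : P)) ^ 2 + 1 = C ((X : A) ^ 2 + 1) := by
    rw [map_add, map_pow, map_one]
  rw [hC2] at h
  have h2 : (C ((X : A) ^ 2 + 1) : P) * Yh = C ((C r : A) - X) := by
    rw [map_sub]
    linear_combination h
  by_cases hY : Yh = 0
  · have h4 : (C r : A) - X = 0 := by
      apply C_injective
      rw [map_zero, ← h2, hY, mul_zero]
    exact myX_ne_C r (sub_eq_zero.mp h4).symm
  · have hne : (C ((X : A) ^ 2 + 1) : P) ≠ 0 := by
      rw [Ne, Polynomial.C_eq_zero]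
      exact X_sq_add_one_ne_zero
    have hdeg : (C ((X : A) ^ 2 + 1) * Yh).natDegree = 0 := by
      rw [h2]; exact natDegree_C _
    rw [natDegree_mul hne hY, natDegree_C] at hdeg
    obtain ⟨y0, hy0⟩ := Polynomial.natDegree_eq_zero.mp (by omega : Yh.natDegree = 0)
    have h3 : ((X : A) ^ 2 + 1) * y0 = (C r : A) - X := by
      apply C_injective
      rw [map_mul, hy0]
      exact h2
    have hy00 : y0 ≠ 0 := by
      intro h0
      rw [h0, map_zero] at hy0
      exact hY hy0.symm
    have hd : (((X : A) ^ 2 + 1) * y0).natDegree = 2 + y0.natDegree := by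
      rw [natDegree_mul X_sq_add_one_ne_zero hy00, X_sq_add_one_natDegree]
    have hd2 : ((C r : A) - X).natDegree ≤ 1 := by
      apply le_trans (natDegree_sub_le _ _)
      simp
    rw [h3] at hd
    omega

end Bookkeeping

noncomputable section Assembly

local notation "A" => Polynomial ℝ
local notation "P" => Polynomial (Polynomial ℝ)
local notation "R3" => MvPolynomial (Fin 3) ℝ

/-- the substitution `X₀ ↦ C X, X₁ ↦ C X, X₂ ↦ X`. -/
def φ₀ : R3 →ₐ[ℝ] P := MvPolynomial.aeval ![C X, C X, X]

lemma algebraMap_P (r : ℝ) : (algebraMap ℝ P) r = C (C r) := by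
  rw [Polynomial.algebraMap_apply, Polynomial.algebraMap_apply]
  rfl

/-- surjectivity of the composed substitution. -/
lemma phi_surj (K : ℕ) : Function.Surjective ((τ K).comp (φ₀ : R3 →ₐ[ℝ] P).toRingHom) := by
  set f := (τ K).comp (φ₀ : R3 →ₐ[ℝ] P).toRingHom with hf
  have hX : (X : P) ∈ f.range := by
    refine ⟨MvPolynomial.X 2, ?_⟩
    show τ K (φ₀ (MvPolynomial.X 2)) = X
    rw [show φ₀ (MvPolynomial.X 2) = (X : P) by simp [φ₀]]
    show Polynomial.eval₂ (cf K) X (X : P) = X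
    rw [Polynomial.eval₂_X]
  have hw : wP K ∈ f.range := by
    refine ⟨MvPolynomial.X 1, ?_⟩
    show τ K (φ₀ (MvPolynomial.X 1)) = wP K
    rw [show φ₀ (MvPolynomial.X 1) = (C X : P) by simp [φ₀]]
    show Polynomial.eval₂ (cf K) X (C X : P) = wP K
    rw [Polynomial.eval₂_C]
    show Polynomial.aeval (wP K) (X : A) = wP K
    rw [Polynomial.aeval_X]
  have hCX : (C (X : A) : P) ∈ f.range := by
    have : (C (X : A) : P) = wP K - X ^ K := by rw [wP]; ring
    rw [this]
    exact sub_mem hw (pow_mem hX K)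
  have hCC : ∀ r : ℝ, (C (C r) : P) ∈ f.range := by
    intro r
    refine ⟨MvPolynomial.C r, ?_⟩
    show τ K (φ₀ (MvPolynomial.C r)) = C (C r)
    rw [show φ₀ (MvPolynomial.C r) = algebraMap ℝ P r by simp [φ₀]]
    rw [algebraMap_P]
    show Polynomial.eval₂ (cf K) X (C (C r) : P) = C (C r)
    rw [Polynomial.eval₂_C]
    show Polynomial.aeval (wP K) (C r : A) = C (C r)
    rw [Polynomial.aeval_C]
    exact algebraMap_P r
  have hCA : ∀ a : A, (C a : P) ∈ f.range := by
    intro a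
    induction a using Polynomial.induction_on with
    | C r => exact hCC r
    | add p q hp hq => rw [map_add]; exact add_mem hp hq
    | monomial n r ih =>
        have : (C (C r * X ^ (n + 1)) : P) = C (C r * X ^ n) * C X := by
          rw [← map_mul]; ring_nf
        rw [this]
        exact mul_mem ih hCX
  have hall : ∀ p : P, p ∈ f.range := by
    intro p
    induction p using Polynomial.induction_on with
    | C a => exact hCA a
    | add p q hp hq => exact add_mem hp hq
    | monomial n a ih =>
        have : (C a * X ^ (n + 1) : P) = (C a * X ^ n) * X := by ring
        rw [this]
        exact mul_mem ih hX
  intro p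
  exact hall p

end Assembly

theorem stmt19 : ¬ LocallyStable (MvPolynomial (Fin 3) ℝ) := by
  intro hLS
  classical
  -- apply local stability to the pair (X₀, X₀² + 1)
  have hcomax : Ideal.span {(MvPolynomial.X 0 : MvPolynomial (Fin 3) ℝ)} ⊔
      Ideal.span {(MvPolynomial.X 0 : MvPolynomial (Fin 3) ℝ) ^ 2 + 1} = ⊤ := by
    apply span_pair_top_of_eq_one (u := -(MvPolynomial.X 0)) (v := 1)
    ring
  obtain ⟨y, hy⟩ := hLS _ _ hcomax
  set c : MvPolynomial (Fin 3) ℝ :=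
    MvPolynomial.X 0 + ((MvPolynomial.X 0) ^ 2 + 1) * y with hc
  -- substitute
  set H : Polynomial (Polynomial ℝ) := φ₀ c with hHdef
  have hHform : H = (C (X : Polynomial ℝ)) + ((C (X : Polynomial ℝ)) ^ 2 + 1) * (φ₀ y) := by
    rw [hHdef, hc]
    rw [map_add, map_mul, map_add, map_pow, map_one]
    have h0 : φ₀ (MvPolynomial.X 0) = (C X : Polynomial (Polynomial ℝ)) := by
      simp [φ₀]
    rw [h0]
  have hH : ∀ r : ℝ, H ≠ C (C r) := by
    intro r hr
    rw [hHform] at hr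
    exact nonconst (φ₀ y) r hr
  obtain ⟨r₀, hr₀, hlc, hdeg⟩ := lemB H hH
  set K := H.natDegree + 1 with hK
  set h' : Polynomial (Polynomial ℝ) := τ K H with hh'
  set h'' : Polynomial (Polynomial ℝ) := C (C r₀⁻¹) * h' with hh''
  have hmonic : h''.Monic := by
    unfold Polynomial.Monic
    rw [hh'', leadingCoeff_mul, leadingCoeff_C, hlc, ← map_mul,
      inv_mul_cancel₀ hr₀, map_one]
  have h'ne : h' ≠ 0 := by
    intro hz
    rw [hz] at hdeg
    simp at hdeg
  have hC0 : (C (C r₀⁻¹) : Polynomial (Polynomial ℝ)) ≠ 0 := by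
    rw [Ne, Polynomial.C_eq_zero, Polynomial.C_eq_zero]
    exact inv_ne_zero hr₀
  have hdeg'' : 1 ≤ h''.natDegree := by
    rw [hh'', natDegree_mul hC0 h'ne, natDegree_C]
    omega
  -- surjection onto AdjoinRoot h''
  set fbig : MvPolynomial (Fin 3) ℝ →+* AdjoinRoot h'' :=
    (AdjoinRoot.mk h'').comp ((τ K).comp (φ₀).toRingHom) with hfbig
  have hfs : Function.Surjective fbig := by
    rw [hfbig, RingHom.coe_comp]
    exact Function.Surjective.comp AdjoinRoot.mk_surjective (phi_surj K)
  have hfc : fbig c = 0 := by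
    show AdjoinRoot.mk h'' ((τ K) (φ₀ c)) = 0
    have hch : (τ K) (φ₀ c) = C (C r₀) * h'' := by
      rw [hh'', ← mul_assoc, ← map_mul, ← map_mul, mul_inv_cancel₀ hr₀, map_one, map_one,
        one_mul]
    rw [hch, map_mul, AdjoinRoot.mk_self, mul_zero]
  have hsr : HasStableRange1 (AdjoinRoot h'') := sr1_transfer fbig hfs c hfc hy
  exact not_sr1_adjoinRoot hmonic hdeg'' hsr
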